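/- Limit characterization of the virtual-variable kernel: assume q_j < q_{j+1} < ⋯ < q_k. Then lim_{x→∞} q_j^{x} · (Q_j ∘ Q_{j+1} ∘ ⋯ ∘ Q_k)(x, y) = q_j^{y + k - j} / ∏_{ℓ=j+1}^{k} (q_ℓ - q_j) for every y ∈ ℤ. -/

import Mathlib

open scoped BigOperators

/-- Composition of kernels on `ℤ`. -/
noncomputable def kComp (A B : ℤ → ℤ → ℝ) : ℤ → ℤ → ℝ :=
  fun x z => ∑' y : ℤ, A x y * B y z

/-- Iterated composition of a list of kernels (identity kernel for the empty list). -/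
noncomputable def kCompList (L : List (ℤ → ℤ → ℝ)) : ℤ → ℤ → ℝ :=
  L.foldr kComp (fun x z => if x = z then 1 else 0)

/-- The strictly-left geometric kernel `Q_j(x,y) = q_j^{y-x} 1_{y<x}`. -/
noncomputable def Qker (q : ℕ → ℝ) (j : ℕ) : ℤ → ℤ → ℝ :=
  fun x y => if y < x then q j ^ (y - x) else 0

/-- `Q_{[a,b]} = Q_a ∘ Q_{a+1} ∘ ⋯ ∘ Q_b`. -/
noncomputable def QcompIcc (q : ℕ → ℝ) (a b : ℕ) : ℤ → ℤ → ℝ :=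
  kCompList (((List.range (b + 1 - a)).map fun s => Qker q (a + s)))

/- ------------------------- auxiliary lemmas ------------------------- -/

lemma QcompIcc_id (q : ℕ → ℝ) (k : ℕ) :
    QcompIcc q (k + 1) k = fun x z => if x = z then 1 else 0 := by
  have : k + 1 - (k + 1) = 0 := by omega
  simp [QcompIcc, this, kCompList]

lemma QcompIcc_cons (q : ℕ → ℝ) (a b : ℕ) (h : a ≤ b) :
    QcompIcc q a b = kComp (Qker q a) (QcompIcc q (a + 1) b) := by
  have h1 : b + 1 - a = (b - a) + 1 := by omega
  have h2 : b + 1 - (a + 1) = b - a := by omega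
  unfold QcompIcc
  rw [h1, h2, List.range_succ_eq_map, List.map_cons, List.map_map]
  have h3 : ((fun s => Qker q (a + s)) ∘ Nat.succ) = fun s => Qker q (a + 1 + s) := by
    funext s
    simp only [Function.comp]
    have hs : a + Nat.succ s = a + 1 + s := by omega
    rw [hs]
  rw [h3]
  rfl

/-- Geometric sum over a half-line of `ℤ`. -/
lemma hasSum_geom_Ioi (r : ℝ) (h0 : 0 < r) (h1 : r < 1) (a : ℤ) :
    HasSum (fun z : ℤ => if a < z then r ^ z else 0) (r ^ (a + 1) / (1 - r)) := by
  set i : ℕ → ℤ := fun n => a + 1 + n with hi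
  have hinj : Function.Injective i := by
    intro m n h
    simpa [hi] using h
  have hvan : ∀ z ∉ Set.range i, (if a < z then r ^ z else 0) = 0 := by
    intro z hz
    rw [if_neg]
    intro hlt
    exact hz ⟨(z - a - 1).toNat, by simp [hi, Int.toNat_of_nonneg (by omega : (0:ℤ) ≤ z - a - 1)]; omega⟩
  rw [← Function.Injective.hasSum_iff hinj hvan]
  have hcomp : ((fun z : ℤ => if a < z then r ^ z else 0) ∘ i) = fun n : ℕ => r ^ (a + 1) * r ^ n := by
    funext n
    have : a < i n := by simp [hi]; omega
    simp only [Function.comp, if_pos this, hi]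
    rw [zpow_add₀ (ne_of_gt h0), zpow_natCast]
    exact if_pos (by omega)
  rw [hcomp, div_eq_mul_inv]
  exact (hasSum_geometric_of_lt_one (le_of_lt h0) h1).mul_left _

/-- Convergence of the truncated sums to the full sum, for a summable
function vanishing below `y`. -/
lemma tendsto_tsum_window (f : ℤ → ℝ) (y : ℤ) (hs : Summable f)
    (hv : ∀ z, z < y → f z = 0) :
    Filter.Tendsto (fun x : ℤ => ∑' z : ℤ, if z < x then f z else 0)
      Filter.atTop (nhds (∑' z, f z)) := by
  set i : ℕ → ℤ := fun n => y + n with hi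
  have hinj : Function.Injective i := by
    intro m n h
    simpa [hi] using h
  have hran : ∀ z : ℤ, z ∉ Set.range i → z < y := by
    intro z hz
    by_contra h
    exact hz ⟨(z - y).toNat, by simp [hi, Int.toNat_of_nonneg (by omega : (0:ℤ) ≤ z - y)]⟩
  have hvf : ∀ z ∉ Set.range i, f z = 0 := fun z hz => hv z (hran z hz)
  have hg : HasSum (f ∘ i) (∑' z, f z) :=
    (Function.Injective.hasSum_iff hinj hvf).mpr hs.hasSum
  have hpart : Filter.Tendsto (fun n : ℕ => ∑ m ∈ Finset.range n, f (y + m))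
      Filter.atTop (nhds (∑' z, f z)) := hg.tendsto_sum_nat
  have htoNat : Filter.Tendsto (fun x : ℤ => (x - y).toNat) Filter.atTop Filter.atTop := by
    refine Filter.tendsto_atTop_atTop.2 fun N => ⟨y + N, fun x hx => ?_⟩
    have h0 : (0:ℤ) ≤ x - y := by omega
    exact (Int.le_toNat h0).mpr (by omega)
  have key : ∀ x : ℤ, (∑' z : ℤ, if z < x then f z else 0)
      = ∑ m ∈ Finset.range (x - y).toNat, f (y + m) := by
    intro x
    set h : ℤ → ℝ := fun z => if z < x then f z else 0 with hh
    have hvan : ∀ z ∉ Set.range i, h z = 0 := by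
      intro z hz
      have hz' := hv z (hran z hz)
      simp only [hh]
      split_ifs <;> simp [hz']
    have hout : ∀ n ∉ Finset.range (x - y).toNat, (h ∘ i) n = 0 := by
      intro n hn
      simp only [Finset.mem_range, not_lt] at hn
      have hnx : ¬ (i n < x) := by
        intro hcon
        have h1 : (n:ℤ) < x - y := by simp only [hi] at hcon; omega
        have := Int.lt_toNat.mpr h1
        omega
      simp [hh, Function.comp, hnx]
    have h1 : HasSum (h ∘ i) (∑ n ∈ Finset.range (x - y).toNat, (h ∘ i) n) :=
      hasSum_sum_of_ne_finset_zero hout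
    have h2 : (∑ n ∈ Finset.range (x - y).toNat, (h ∘ i) n)
        = ∑ m ∈ Finset.range (x - y).toNat, f (y + m) := by
      refine Finset.sum_congr rfl fun n hn => ?_
      simp only [Finset.mem_range] at hn
      have : i n < x := by
        have := Int.lt_toNat.mp hn
        simp only [hi]; omega
      simp [hh, Function.comp, this]
      rfl
    rw [h2] at h1
    exact ((Function.Injective.hasSum_iff hinj hvan).mp h1).tsum_eq
  have := hpart.comp htoNat
  refine this.congr fun x => (key x).symm

section Main

variable (q : ℕ → ℝ) (j k : ℕ) (y : ℤ)

lemma Qcomp_nonneg (hpos : ∀ m, j ≤ m → m ≤ k → 0 < q m) :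
    ∀ d m, j ≤ m → m + d = k + 1 → ∀ z w : ℤ, 0 ≤ QcompIcc q m k z w := by
  intro d
  induction d with
  | zero =>
    intro m hjm hmd z w
    have : m = k + 1 := by omega
    subst this
    rw [QcompIcc_id]
    positivity
  | succ d ih =>
    intro m hjm hmd z w
    have hmk : m ≤ k := by omega
    rw [QcompIcc_cons q m k hmk]
    refine tsum_nonneg fun u => mul_nonneg ?_ (ih (m + 1) (by omega) (by omega) u w)
    unfold Qker
    have := hpos m hjm hmk
    positivity

lemma Qcomp_vanish :
    ∀ d m, m + d = k + 1 → ∀ z : ℤ, z < y → QcompIcc q m k z y = 0 := by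
  intro d
  induction d with
  | zero =>
    intro m hmd z hz
    have : m = k + 1 := by omega
    subst this
    rw [QcompIcc_id]
    simp only [if_neg (by omega : ¬ z = y)]
  | succ d ih =>
    intro m hmd z hz
    have hmk : m ≤ k := by omega
    rw [QcompIcc_cons q m k hmk]
    unfold kComp
    rw [← tsum_zero]
    refine tsum_congr fun w => ?_
    by_cases hw : w < z
    · rw [ih (m + 1) (by omega) w (by omega), mul_zero]
    · unfold Qker
      rw [if_neg hw, zero_mul]

lemma keyE (hlt : ∀ m, j < m → m ≤ k → q j < q m)
    (hpos : ∀ m, j ≤ m → m ≤ k → 0 < q m) (hj0 : 0 < q j) :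
    ∀ d m, j < m → m + d = k + 1 →
      HasSum (fun z : ℤ => q j ^ z * QcompIcc q m k z y)
        (q j ^ (y + (k : ℤ) + 1 - (m : ℤ)) / ∏ ℓ ∈ Finset.Icc m k, (q ℓ - q j)) := by
  intro d
  induction d with
  | zero =>
    intro m hjm hmd
    have hm : m = k + 1 := by omega
    subst hm
    rw [QcompIcc_id]
    have hfun : (fun z : ℤ => q j ^ z * if z = y then (1:ℝ) else 0)
        = fun z : ℤ => if z = y then q j ^ y else 0 := by
      funext z
      split_ifs with h
      · rw [h, mul_one]
      · rw [mul_zero]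
    rw [hfun]
    have hprod : (∏ ℓ ∈ Finset.Icc (k + 1) k, (q ℓ - q j)) = 1 := by
      rw [Finset.Icc_eq_empty (by omega), Finset.prod_empty]
    have hexp : y + (k : ℤ) + 1 - ((k + 1 : ℕ) : ℤ) = y := by push_cast; ring
    rw [hprod, hexp, div_one]
    exact hasSum_ite_eq y _
  | succ d ih =>
    intro m hjm hmd
    have hmk : m ≤ k := by omega
    have hm0 : 0 < q m := hpos m (le_of_lt hjm) hmk
    have hqlt : q j < q m := hlt m hjm hmk
    have hjne : q j ≠ 0 := ne_of_gt hj0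
    have hmne : q m ≠ 0 := ne_of_gt hm0
    have hdne : q m - q j ≠ 0 := by linarith
    set r : ℝ := q j / q m with hr
    have hr0 : 0 < r := div_pos hj0 hm0
    have hr1 : r < 1 := (div_lt_one hm0).mpr hqlt
    set G : ℤ → ℝ := fun w => QcompIcc q (m + 1) k w y with hG
    have hGnn : ∀ w, 0 ≤ G w := fun w =>
      Qcomp_nonneg q j k hpos d (m + 1) (by omega) (by omega) w y
    -- fiberwise geometric sums
    have fiber : ∀ w : ℤ, HasSum (fun z : ℤ => q j ^ z * Qker q m z w)
        (q j ^ (w + 1) / (q m - q j)) := by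
      intro w
      have h := (hasSum_geom_Ioi r hr0 hr1 w).mul_left (q m ^ w)
      have hfun : (fun z : ℤ => q m ^ w * if w < z then r ^ z else 0)
          = fun z : ℤ => q j ^ z * Qker q m z w := by
        funext z
        unfold Qker
        split_ifs with hwz
        · rw [hr, div_zpow, zpow_sub₀ hmne]
          field_simp
        · rw [mul_zero, mul_zero]
      have hval : q m ^ w * (r ^ (w + 1) / (1 - r)) = q j ^ (w + 1) / (q m - q j) := by
        rw [hr, div_zpow]
        have h1 : (1 : ℝ) - q j / q m = (q m - q j) / q m := by field_simp
        rw [h1, div_div_div_eq]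
        rw [zpow_add_one₀ hjne, zpow_add_one₀ hmne]
        field_simp
      rw [hfun, hval] at h
      exact h
    -- the product kernel function
    set F : ℤ × ℤ → ℝ := fun p => (q j ^ p.2 * Qker q m p.2 p.1) * G p.1 with hF
    have hFnn : 0 ≤ F := by
      intro p
      refine mul_nonneg (mul_nonneg ?_ ?_) (hGnn p.1)
      · positivity
      · unfold Qker; positivity
    have fiberW : ∀ w : ℤ, HasSum (fun z => F (w, z))
        (q j ^ (w + 1) / (q m - q j) * G w) := fun w => (fiber w).mul_right (G w)
    have ihm : HasSum (fun w : ℤ => q j ^ w * QcompIcc q (m + 1) k w y)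
        (q j ^ (y + (k : ℤ) + 1 - ((m + 1 : ℕ) : ℤ)) /
          ∏ ℓ ∈ Finset.Icc (m + 1) k, (q ℓ - q j)) := ih (m + 1) (by omega) (by omega)
    set S' : ℝ := q j ^ (y + (k : ℤ) + 1 - ((m + 1 : ℕ) : ℤ)) /
          ∏ ℓ ∈ Finset.Icc (m + 1) k, (q ℓ - q j) with hS'
    have sumW : HasSum (fun w : ℤ => q j ^ (w + 1) / (q m - q j) * G w)
        (q j / (q m - q j) * S') := by
      have h := ihm.mul_left (q j / (q m - q j))
      have hfun : (fun w : ℤ => q j / (q m - q j) * (q j ^ w * QcompIcc q (m + 1) k w y))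
          = fun w : ℤ => q j ^ (w + 1) / (q m - q j) * G w := by
        funext w
        rw [hG, zpow_add_one₀ hjne]
        ring
      rw [hfun] at h
      exact h
    have hFsummable : Summable F := by
      refine (summable_prod_of_nonneg hFnn).mpr ⟨fun w => (fiberW w).summable, ?_⟩
      exact sumW.summable.congr fun w => ((fiberW w).tsum_eq).symm
    have htsumF : ∑' p, F p = q j / (q m - q j) * S' := by
      rw [Summable.tsum_prod' hFsummable fun w => (fiberW w).summable]
      rw [tsum_congr fun w => (fiberW w).tsum_eq]
      exact sumW.tsum_eq
    -- swap the order
    set Fsw : ℤ × ℤ → ℝ := fun p => F p.swap with hFsw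
    have hFswnn : 0 ≤ Fsw := fun p => hFnn p.swap
    have hFswsummable : Summable Fsw := hFsummable.prod_symm
    have hpair := (summable_prod_of_nonneg hFswnn).mp hFswsummable
    have hptw : ∀ z : ℤ, (∑' w : ℤ, Fsw (z, w)) = q j ^ z * QcompIcc q m k z y := by
      intro z
      rw [QcompIcc_cons q m k hmk]
      unfold kComp
      rw [← tsum_mul_left]
      refine tsum_congr fun w => ?_
      simp only [hFsw, hF, Prod.swap, hG]
      ring
    have hsummable2 : Summable (fun z : ℤ => q j ^ z * QcompIcc q m k z y) :=
      hpair.2.congr hptw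
    have htsum2 : ∑' z : ℤ, q j ^ z * QcompIcc q m k z y = q j / (q m - q j) * S' := by
      rw [← tsum_congr hptw, ← Summable.tsum_prod' hFswsummable hpair.1]
      have hswap : ∑' p, Fsw p = ∑' p, F p := (Equiv.prodComm ℤ ℤ).tsum_eq F
      rw [hswap, htsumF]
    refine (Summable.hasSum_iff hsummable2).mpr ?_
    rw [htsum2, hS']
    have hprodsplit : (∏ ℓ ∈ Finset.Icc m k, (q ℓ - q j))
        = (q m - q j) * ∏ ℓ ∈ Finset.Icc (m + 1) k, (q ℓ - q j) := by
      rw [← Finset.Ico_add_one_right_eq_Icc, ← Finset.Ico_add_one_right_eq_Icc,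
        Finset.prod_eq_prod_Ico_succ_bot (by omega : m < k + 1)]
    have hexp : q j ^ (y + (k : ℤ) + 1 - (m : ℤ))
        = q j ^ (y + (k : ℤ) + 1 - ((m + 1 : ℕ) : ℤ)) * q j := by
      have he : y + (k : ℤ) + 1 - (m : ℤ) = (y + (k : ℤ) + 1 - ((m + 1 : ℕ) : ℤ)) + 1 := by
        push_cast; ring
      rw [he, zpow_add_one₀ hjne]
    have hPne : (∏ ℓ ∈ Finset.Icc (m + 1) k, (q ℓ - q j)) ≠ 0 := by
      refine Finset.prod_ne_zero_iff.mpr fun ℓ hℓ => ?_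
      simp only [Finset.mem_Icc] at hℓ
      have := hlt ℓ (by omega) hℓ.2
      linarith
    rw [hprodsplit, hexp]
    field_simp

end Main

/-- limit characterization of the virtual-variable kernel.  If
`1 < q_j < q_{j+1} < ⋯ < q_k`, then
`lim_{x→∞} q_j^x (Q_j∘⋯∘Q_k)(x,y) = q_j^{y+k-j} / ∏_{ℓ=j+1}^{k} (q_ℓ - q_j)`. -/
theorem stmt18 (j k : ℕ) (hjk : j ≤ k) (q : ℕ → ℝ) (hq : 1 < q j)
    (hmono : ∀ a b : ℕ, j ≤ a → a < b → b ≤ k → q a < q b) (y : ℤ) :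
    Filter.Tendsto (fun x : ℤ => q j ^ x * QcompIcc q j k x y) Filter.atTop
      (nhds (q j ^ (y + (k : ℤ) - (j : ℤ)) /
        ∏ ℓ ∈ Finset.Icc (j + 1) k, (q ℓ - q j))) := by
  have hj0 : 0 < q j := lt_trans zero_lt_one hq
  have hjne : q j ≠ 0 := ne_of_gt hj0
  have hlt : ∀ m, j < m → m ≤ k → q j < q m := fun m h1 h2 => hmono j m le_rfl h1 h2
  have hpos : ∀ m, j ≤ m → m ≤ k → 0 < q m := by
    intro m h1 h2
    rcases eq_or_lt_of_le h1 with h | h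
    · rw [← h]; exact hj0
    · exact lt_trans hj0 (hlt m h h2)
  have E := keyE q j k y hlt hpos hj0 (k - j) (j + 1) (by omega) (by omega)
  have hexp : y + (k : ℤ) + 1 - ((j + 1 : ℕ) : ℤ) = y + (k : ℤ) - (j : ℤ) := by
    push_cast; ring
  rw [hexp] at E
  have hvan : ∀ z : ℤ, z < y → q j ^ z * QcompIcc q (j + 1) k z y = 0 := by
    intro z hz
    rw [Qcomp_vanish q k y (k - j) (j + 1) (by omega) z hz, mul_zero]
  have hT := tendsto_tsum_window _ y E.summable hvan
  rw [E.tsum_eq] at hT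
  refine hT.congr fun x => ?_
  rw [QcompIcc_cons q j k hjk]
  unfold kComp
  rw [← tsum_mul_left]
  refine (tsum_congr fun z => ?_).symm
  unfold Qker
  split_ifs with hzx
  · rw [← mul_assoc, ← zpow_add₀ hjne, show x + (z - x) = z by ring]
  · rw [zero_mul, mul_zero]
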